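/- arXiv:2403.18758 — 2 statements merged into one kernel-verified Lean document; each statement's English description precedes it below -/
import Mathlib

section
/- Let k be a field, G a group, H ≤ G a subgroup whose group algebra k[H] is left coherent, and suppose every finitely generated subgroup of G is contained in a subgroup K ≤ G with k[K] left coherent. If every finitely generated left ideal of k[G] is generated by elements of k[K] for some such K, then every finitely generated left ideal of k[G] is finitely presented. In particular, if every finitely generated subgroup H of G has coherent group algebra k[H], then k[G] is left coherent. -/
/-- A ring `R` is left coherent if every finitely generated left ideal of `R` is finitely
presented as an `R`-module. -/
def LeftCoherent (R : Type) [Ring R] : Prop :=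
  ∀ I : Ideal R, I.FG → Module.FinitePresentation R I

namespace GroupAlgebraCoherence

open Finsupp

variable {k : Type} [Field k] {G : Type} [Group G] (K : Subgroup G)

/-- The "subgroup part" of `g` relative to the chosen coset representative. -/
noncomputable def sect (g : G) : K :=
  ⟨(Quotient.out ((g : G ⧸ K)))⁻¹ * g, by
    rw [← QuotientGroup.eq]
    exact QuotientGroup.out_eq' _⟩

lemma sect_spec (g : G) : (Quotient.out ((g : G ⧸ K))) * ((sect K g : K) : G) = g :=
  mul_inv_cancel_left _ _

variable (k) in
/-- The embedding `k[K] → k[G]`. -/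
noncomputable abbrev fmap : MonoidAlgebra k K →+* MonoidAlgebra k G :=
  MonoidAlgebra.mapDomainRingHom k K.subtype

/-- Decomposition of `k[G]` into `k[K]`-components indexed by left cosets. -/
noncomputable def Phi (a : MonoidAlgebra k G) : (G ⧸ K) →₀ MonoidAlgebra k K :=
  a.coeff.sum fun g c => Finsupp.single (g : G ⧸ K) (MonoidAlgebra.single (sect K g) c)

lemma Phi_zero : Phi K (0 : MonoidAlgebra k G) = 0 :=
  Finsupp.sum_zero_index

lemma Phi_single (g : G) (c : k) :
    Phi K (MonoidAlgebra.single g c) =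
      Finsupp.single (g : G ⧸ K) (MonoidAlgebra.single (sect K g) c) :=
  Finsupp.sum_single_index (by simp)

lemma Phi_add (a b : MonoidAlgebra k G) : Phi K (a + b) = Phi K a + Phi K b :=
  Finsupp.sum_add_index' (fun g => by simp)
    (fun g c₁ c₂ => by
      rw [show MonoidAlgebra.single (sect K g) (c₁ + c₂)
            = MonoidAlgebra.single (sect K g) c₁ + MonoidAlgebra.single (sect K g) c₂ from
          MonoidAlgebra.single_add _ _ _]
      exact Finsupp.single_add _ _ _)

/-- `Phi` as an additive monoid hom. -/
noncomputable def PhiHom : MonoidAlgebra k G →+ ((G ⧸ K) →₀ MonoidAlgebra k K) :=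
  AddMonoidHom.mk' (Phi K) (Phi_add K)

@[simp] lemma PhiHom_apply (a : MonoidAlgebra k G) : PhiHom K a = Phi K a := rfl

/-- Reconstruction map. -/
noncomputable def Psi (y : (G ⧸ K) →₀ MonoidAlgebra k K) : MonoidAlgebra k G :=
  y.sum fun c r => MonoidAlgebra.single (Quotient.out c) (1 : k) * fmap k K r

lemma Psi_recon (a : MonoidAlgebra k G) : Psi K (Phi K a) = a := by
  induction a using MonoidAlgebra.induction_linear with
  | zero => rw [Phi_zero]; exact Finsupp.sum_zero_index
  | add u v hu hv =>
      rw [Phi_add]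
      rw [show Psi K (Phi K u + Phi K v) = Psi K (Phi K u) + Psi K (Phi K v) from
        Finsupp.sum_add_index' (fun c => by simp) (fun c r₁ r₂ => by rw [map_add, mul_add])]
      rw [hu, hv]
  | single g c =>
      rw [Phi_single]
      unfold Psi
      rw [Finsupp.sum_single_index (by simp)]
      rw [show (fmap k K) (MonoidAlgebra.single (sect K g) c)
            = MonoidAlgebra.single ((sect K g : K) : G) c from MonoidAlgebra.mapDomain_single]
      rw [MonoidAlgebra.single_mul_single, one_mul, sect_spec]

lemma Phi_mul (a : MonoidAlgebra k G) (r : MonoidAlgebra k K) (c : G ⧸ K) :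
    Phi K (a * fmap k K r) c = Phi K a c * r := by
  classical
  induction a using MonoidAlgebra.induction_linear with
  | zero => simp [Phi_zero]
  | add u v hu hv =>
      rw [add_mul, Phi_add, Finsupp.add_apply, hu, hv, Phi_add, Finsupp.add_apply, add_mul]
  | single g b =>
      induction r using MonoidAlgebra.induction_linear with
      | zero => simp [Phi_zero]
      | add r s hr hs =>
          rw [map_add, mul_add, Phi_add, Finsupp.add_apply, hr, hs, mul_add]
      | single κ d =>
          rw [show (fmap k K) (MonoidAlgebra.single κ d) = MonoidAlgebra.single ((κ : K) : G) d from
            MonoidAlgebra.mapDomain_single]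
          rw [MonoidAlgebra.single_mul_single, Phi_single, Phi_single]
          have h1 : ((g * ((κ : K) : G) : G) : G ⧸ K) = (g : G ⧸ K) :=
            QuotientGroup.mk_mul_of_mem g κ.2
          have h2 : sect K (g * ((κ : K) : G)) = sect K g * κ := by
            apply Subtype.ext
            show (Quotient.out (((g * ((κ : K) : G) : G) : G ⧸ K)))⁻¹ * (g * ((κ : K) : G))
              = ((Quotient.out ((g : G ⧸ K)))⁻¹ * g) * ((κ : K) : G)
            rw [h1, mul_assoc]
          rw [h1, h2]
          rw [Finsupp.single_apply, Finsupp.single_apply]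
          split_ifs with h
          · rw [MonoidAlgebra.single_mul_single]
          · rw [zero_mul]

/-- The key lemma: the ideal of `k[G]` generated by finitely many elements coming from a
subgroup `K` with `k[K]` left coherent is finitely presented. -/
lemma key (K : Subgroup G) (hK : LeftCoherent (MonoidAlgebra k K))
    (S : Finset (MonoidAlgebra k K)) :
    Module.FinitePresentation (MonoidAlgebra k G)
      (Submodule.span (MonoidAlgebra k G)
        (⇑(MonoidAlgebra.mapDomainRingHom k K.subtype) '' (S : Set (MonoidAlgebra k K)))) := by
  classical
  let R := MonoidAlgebra k K
  let A := MonoidAlgebra k G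
  let f : R →+* A := MonoidAlgebra.mapDomainRingHom k K.subtype
  -- the presentation over R
  let q : (↥S →₀ R) →ₗ[R] R := Finsupp.linearCombination R Subtype.val
  have hqr : LinearMap.range q = Submodule.span R (S : Set R) := by
    rw [Finsupp.range_linearCombination, Subtype.range_coe_subtype, Finset.setOf_mem]
  haveI : Module.FinitePresentation R ↥(Submodule.span R (S : Set R)) := hK _ ⟨S, rfl⟩
  let q' : (↥S →₀ R) →ₗ[R] ↥(Submodule.span R (S : Set R)) :=
    q.codRestrict _ (fun x => hqr ▸ LinearMap.mem_range_self q x)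
  have hq's : Function.Surjective q' := by
    rintro ⟨y, hy⟩
    rw [← hqr] at hy
    obtain ⟨x, hx⟩ := hy
    exact ⟨x, Subtype.ext hx⟩
  have hkerq : (LinearMap.ker q).FG := by
    have h := Module.FinitePresentation.fg_ker q' hq's
    rwa [LinearMap.ker_codRestrict] at h
  obtain ⟨W, hW⟩ := hkerq
  -- the presentation over A
  let p : (↥S →₀ A) →ₗ[A] A := Finsupp.linearCombination A (fun i => f ↑i)
  have hpr : LinearMap.range p = Submodule.span A (⇑f '' (S : Set R)) := by
    rw [Finsupp.range_linearCombination]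
    congr 1
    rw [show (fun (i : ↥S) => f ↑i) = ⇑f ∘ Subtype.val from rfl, Set.range_comp,
      Subtype.range_coe_subtype, Finset.setOf_mem]
  let F : (↥S →₀ R) → (↥S →₀ A) := Finsupp.mapRange ⇑f (map_zero f)
  have hF0 : F 0 = 0 := Finsupp.mapRange_zero
  have hpF : ∀ w, p (F w) = f (q w) := by
    intro w
    rw [show p (F w) = (F w).sum fun i a => a • f ↑i from Finsupp.linearCombination_apply _ _,
      Finsupp.sum_mapRange_index (fun i => by rw [zero_smul]),
      show q w = w.sum fun i r => r • (↑i : R) from Finsupp.linearCombination_apply _ _,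
      map_finsuppSum]
    exact Finsupp.sum_congr fun i _ => by rw [smul_eq_mul, smul_eq_mul, map_mul]
  have hFsemi : ∀ w ∈ LinearMap.ker q,
      F w ∈ Submodule.span A (F '' (W : Set (↥S →₀ R))) := by
    intro w hw
    rw [← hW] at hw
    induction hw using Submodule.span_induction with
    | mem x hx => exact Submodule.subset_span ⟨x, hx, rfl⟩
    | zero => rw [hF0]; exact Submodule.zero_mem _
    | add x y _ _ ihx ihy =>
        rw [show F (x + y) = F x + F y from Finsupp.mapRange_add (map_add f) x y]
        exact Submodule.add_mem _ ihx ihy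
    | smul r x _ ih =>
        have hsm : F (r • x) = f r • F x := by
          ext i
          rw [Finsupp.mapRange_apply, Finsupp.smul_apply, Finsupp.smul_apply,
            Finsupp.mapRange_apply, smul_eq_mul, smul_eq_mul, map_mul]
        rw [hsm]
        exact Submodule.smul_mem _ _ ih
  have hker : LinearMap.ker p = Submodule.span A (F '' (W : Set (↥S →₀ R))) := by
    apply le_antisymm
    · intro x hx
      rw [LinearMap.mem_ker] at hx
      haveI : DecidableEq (G ⧸ K) := Classical.decEq _
      set T : Finset (G ⧸ K) := x.support.biUnion (fun i => (Phi K (x i)).support) with hT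
      have hsub : ∀ i : ↥S, (Phi K (x i)).support ⊆ T := by
        intro i
        by_cases hi : i ∈ x.support
        · exact Finset.subset_biUnion_of_mem (fun j => (Phi K (x j)).support) hi
        · rw [Finsupp.notMem_support_iff.mp hi, Phi_zero]
          simp
      let v : G ⧸ K → (↥S →₀ R) :=
        fun c => Finsupp.mapRange (fun a => Phi K a c) (by show Phi K (0 : A) c = 0; rw [Phi_zero]; rfl) x
      have hv : ∀ c, v c ∈ LinearMap.ker q := by
        intro c
        have hkey : q (v c) = Phi K (p x) c := by
          rw [show q (v c) = (v c).sum fun i r => r • (↑i : R) from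
              Finsupp.linearCombination_apply _ _,
            Finsupp.sum_mapRange_index (fun i => by rw [zero_smul]),
            show p x = x.sum fun i a => a • f ↑i from Finsupp.linearCombination_apply _ _,
            ← PhiHom_apply, map_finsuppSum, Finsupp.sum_apply]
          refine Finsupp.sum_congr fun i _ => ?_
          rw [PhiHom_apply, smul_eq_mul, smul_eq_mul, Phi_mul]
        rw [LinearMap.mem_ker, hkey, hx, Phi_zero, Finsupp.zero_apply]
      have hterm : ∀ (c : G ⧸ K) (i : ↥S),
          (((MonoidAlgebra.single (Quotient.out c) (1 : k) : A) • F (v c)) i)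
            = MonoidAlgebra.single (Quotient.out c) (1 : k) * f (Phi K (x i) c) := by
        intro c i
        rw [Finsupp.smul_apply, Finsupp.mapRange_apply, Finsupp.mapRange_apply, smul_eq_mul]
      have hxdec : x = ∑ c ∈ T, (MonoidAlgebra.single (Quotient.out c) (1 : k) : A) • F (v c) := by
        refine Finsupp.ext fun i => ?_
        calc x i = ∑ c ∈ (Phi K (x i)).support,
                MonoidAlgebra.single (Quotient.out c) (1 : k) * f (Phi K (x i) c) := by
              conv_lhs => rw [← Psi_recon K (x i)]
              rfl
          _ = ∑ c ∈ T, MonoidAlgebra.single (Quotient.out c) (1 : k) * f (Phi K (x i) c) :=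
              Finset.sum_subset (hsub i) (fun c _ hc => by
                rw [Finsupp.notMem_support_iff.mp hc, map_zero, mul_zero])
          _ = ∑ c ∈ T, ((MonoidAlgebra.single (Quotient.out c) (1 : k) : A) • F (v c)) i :=
              Finset.sum_congr rfl (fun c _ => (hterm c i).symm)
          _ = (∑ c ∈ T, (MonoidAlgebra.single (Quotient.out c) (1 : k) : A) • F (v c)) i :=
              (Finsupp.finset_sum_apply _ _ _).symm
      rw [hxdec]
      exact Submodule.sum_mem _ fun c _ => Submodule.smul_mem _ _ (hFsemi (v c) (hv c))
    · rw [Submodule.span_le]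
      rintro _ ⟨w, hw, rfl⟩
      rw [SetLike.mem_coe, LinearMap.mem_ker, hpF]
      have hwk : w ∈ LinearMap.ker q := hW ▸ Submodule.subset_span hw
      rw [LinearMap.mem_ker.mp hwk, map_zero]
  -- assemble
  apply Module.finitePresentation_of_free_of_surjective
    (p.codRestrict (Submodule.span A (⇑f '' (S : Set R)))
      (fun x => hpr ▸ LinearMap.mem_range_self p x))
  · rintro ⟨y, hy⟩
    rw [← hpr] at hy
    obtain ⟨x, hx⟩ := hy
    exact ⟨x, Subtype.ext hx⟩
  · rw [LinearMap.ker_codRestrict, hker]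
    exact ⟨W.image F, by rw [Finset.coe_image]⟩

end GroupAlgebraCoherence

/-- Let `k` be a field, `G` a group, `H ≤ G` a subgroup whose group algebra `k[H]` is left
coherent, and suppose every finitely generated subgroup of `G` is contained in a subgroup
`K ≤ G` with `k[K]` left coherent.  If every finitely generated left ideal of `k[G]` is
generated by (finitely many) elements of `k[K]` for some such `K`, then every finitely
generated left ideal of `k[G]` is finitely presented.  In particular, if every finitely
generated subgroup `H'` of `G` has coherent group algebra `k[H']`, then `k[G]` is left
coherent. -/
theorem groupAlgebra_left_coherent
    (k : Type) [Field k] (G : Type) [Group G]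
    (H : Subgroup G) (hH : LeftCoherent (MonoidAlgebra k H))
    (hcontain : ∀ F : Subgroup G, F.FG →
      ∃ K : Subgroup G, F ≤ K ∧ LeftCoherent (MonoidAlgebra k K))
    (hideals : ∀ I : Ideal (MonoidAlgebra k G), I.FG →
      ∃ K : Subgroup G, LeftCoherent (MonoidAlgebra k K) ∧
        ∃ S : Finset (MonoidAlgebra k K),
          I = Submodule.span (MonoidAlgebra k G)
            (⇑(MonoidAlgebra.mapDomainRingHom k K.subtype) '' (S : Set (MonoidAlgebra k K)))) :
    (∀ I : Ideal (MonoidAlgebra k G), I.FG → Module.FinitePresentation (MonoidAlgebra k G) I) ∧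
    ((∀ H' : Subgroup G, H'.FG → LeftCoherent (MonoidAlgebra k H')) →
      LeftCoherent (MonoidAlgebra k G)) := by
  have main : ∀ I : Ideal (MonoidAlgebra k G), I.FG →
      Module.FinitePresentation (MonoidAlgebra k G) I := by
    intro I hIfg
    obtain ⟨K, hK, S, hI⟩ := hideals I hIfg
    subst hI
    exact GroupAlgebraCoherence.key K hK S
  exact ⟨main, fun _ => main⟩
end

section
/- Let R be a ring of left global dimension n that embeds into a division ring D such that D has weak dimension at most n − 1 as a right R-module (i.e., Tor_n^R(D, M) = 0 for every left R-module M). Then every left ideal of R of type FP_{n−1} is of type FP_n; that is, R is left (n−1)-coherent. -/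
open CategoryTheory

section NCTensor

variable (R : Type) [Ring R] (D : Type) [AddCommGroup D] [Module Rᵐᵒᵖ D]

/-- The balancing relations defining the tensor product `D ⊗_R X` of a right `R`-module `D`
and a left `R`-module `X` as a quotient of `D ⊗_ℤ X`. -/
def balancedRel (X : Type) [AddCommGroup X] [Module R X] :
    Submodule ℤ (TensorProduct ℤ D X) :=
  Submodule.span ℤ
    {z | ∃ (e : D) (r : R) (x : X),
      z = (MulOpposite.op r • e) ⊗ₜ[ℤ] x - e ⊗ₜ[ℤ] (r • x)}

/-- The tensor product `D ⊗_R X` of a right `R`-module `D` and a left `R`-module `X`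
(over a possibly noncommutative ring `R`), as a quotient of `D ⊗_ℤ X` by the balancing
relations. -/
def NCTensor (X : Type) [AddCommGroup X] [Module R X] : Type :=
  TensorProduct ℤ D X ⧸ balancedRel R D X

noncomputable instance (X : Type) [AddCommGroup X] [Module R X] : AddCommGroup (NCTensor R D X) :=
  inferInstanceAs (AddCommGroup (TensorProduct ℤ D X ⧸ balancedRel R D X))

/-- The class of the elementary tensor `e ⊗ x` in `D ⊗_R X`. -/
noncomputable def NCTensor.tmul {X : Type} [AddCommGroup X] [Module R X] (e : D) (x : X) :
    NCTensor R D X :=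
  Submodule.Quotient.mk (e ⊗ₜ[ℤ] x)

/-- Functoriality of `D ⊗_R -` in `R`-linear maps. -/
noncomputable def NCTensor.map {X Y : Type} [AddCommGroup X] [Module R X] [AddCommGroup Y] [Module R Y]
    (f : X →ₗ[R] Y) : NCTensor R D X →ₗ[ℤ] NCTensor R D Y :=
  Submodule.mapQ (balancedRel R D X) (balancedRel R D Y)
    (TensorProduct.map LinearMap.id f.toAddMonoidHom.toIntLinearMap)
    (by
      unfold balancedRel
      rw [Submodule.span_le]
      rintro z ⟨e, r, x, rfl⟩
      simp only [SetLike.mem_coe, Submodule.mem_comap, map_sub, TensorProduct.map_tmul,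
        LinearMap.id_coe, id_eq, AddMonoidHom.coe_toIntLinearMap,
        LinearMap.toAddMonoidHom_coe, map_smul]
      refine Submodule.subset_span ⟨e, r, f x, ?_⟩
      have h := (TensorProduct.map (LinearMap.id (R := ℤ) (M := D))
        f.toAddMonoidHom.toIntLinearMap).map_sub ((MulOpposite.op r • e) ⊗ₜ[ℤ] x) (e ⊗ₜ[ℤ] (r • x))
      rw [TensorProduct.map_tmul, TensorProduct.map_tmul] at h
      simp only [LinearMap.id_coe, id_eq, AddMonoidHom.coe_toIntLinearMap,
        LinearMap.toAddMonoidHom_coe, map_smul] at h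
      exact h)

end NCTensor

section Resolutions

variable (R : Type) [Ring R]

/-- `M` admits a partial resolution by finitely generated free modules up to degree `n`,
i.e. `M` is of type `FP_n` over `R`. -/
def ModuleTypeFPn (M : ModuleCat R) (n : ℕ) : Prop :=
  ∃ (F : ℕ → ModuleCat R) (d : ∀ i, F (i + 1) ⟶ F i) (ε : F 0 ⟶ M),
    (∀ i, i ≤ n → Module.Finite R (F i)) ∧ (∀ i, i ≤ n → Module.Free R (F i)) ∧
    Function.Surjective ε ∧ Function.Exact (d 0) ε ∧
    ∀ i, i + 2 ≤ n → Function.Exact (d (i + 1)) (d i)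

/-- `M` admits a finite length resolution by finitely generated projective modules,
i.e. `M` is of type `FP` over `R`. -/
def ModuleTypeFP (M : ModuleCat R) : Prop :=
  ∃ (m : ℕ) (F : ℕ → ModuleCat R) (d : ∀ i, F (i + 1) ⟶ F i) (ε : F 0 ⟶ M),
    (∀ i, Module.Finite R (F i)) ∧ (∀ i, Module.Projective R (F i)) ∧
    (∀ i, m < i → Subsingleton (F i)) ∧
    Function.Surjective ε ∧ Function.Exact (d 0) ε ∧
    ∀ i, Function.Exact (d (i + 1)) (d i)

/-- `M` admits a projective resolution of length at most `n`. -/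
def HasProjResLen (M : ModuleCat R) (n : ℕ) : Prop :=
  ∃ (F : ℕ → ModuleCat R) (d : ∀ i, F (i + 1) ⟶ F i) (ε : F 0 ⟶ M),
    (∀ i, Module.Projective R (F i)) ∧ (∀ i, n < i → Subsingleton (F i)) ∧
    Function.Surjective ε ∧ Function.Exact (d 0) ε ∧
    ∀ i, Function.Exact (d (i + 1)) (d i)

end Resolutions


section AuxNCT

/-! Auxiliary NCTensor lemmas -/

section NCT2

variable {R : Type} [Ring R] {D : Type} [AddCommGroup D] [Module Rᵐᵒᵖ D]
variable {X Y : Type} [AddCommGroup X] [Module R X] [AddCommGroup Y] [Module R Y]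

lemma NCTensor.induction_on {motive : NCTensor R D X → Prop} (t : NCTensor R D X)
    (hz : motive 0) (ht : ∀ e x, motive (NCTensor.tmul R D e x))
    (ha : ∀ s t, motive s → motive t → motive (s + t)) : motive t := by
  obtain ⟨u, rfl⟩ := Submodule.Quotient.mk_surjective _ t
  induction u using TensorProduct.induction_on with
  | zero => exact hz
  | tmul e x => exact ht e x
  | add u v hu hv => rw [Submodule.Quotient.mk_add]; exact ha _ _ hu hv

lemma NCTensor.map_tmul (f : X →ₗ[R] Y) (e : D) (x : X) :
    NCTensor.map R D f (NCTensor.tmul R D e x) = NCTensor.tmul R D e (f x) := by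
  rfl

lemma NCTensor.tmul_add (e : D) (x y : X) :
    NCTensor.tmul R D e (x + y) = NCTensor.tmul R D e x + NCTensor.tmul R D e y := by
  simp only [NCTensor.tmul, TensorProduct.tmul_add, ← Submodule.mkQ_apply, map_add]; rfl

lemma NCTensor.add_tmul (e e' : D) (x : X) :
    NCTensor.tmul R D (e + e') x = NCTensor.tmul R D e x + NCTensor.tmul R D e' x := by
  simp only [NCTensor.tmul, TensorProduct.add_tmul, ← Submodule.mkQ_apply, map_add]; rfl

lemma NCTensor.zero_tmul (x : X) :
    NCTensor.tmul R D (0 : D) x = 0 := by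
  simp [NCTensor.tmul]; rfl

lemma NCTensor.tmul_zero (e : D) :
    NCTensor.tmul R D e (0 : X) = 0 := by
  simp [NCTensor.tmul]; rfl

lemma NCTensor.tmul_balanced (e : D) (r : R) (x : X) :
    NCTensor.tmul R D e (r • x) = NCTensor.tmul R D (MulOpposite.op r • e) x := by
  unfold NCTensor.tmul
  refine ((Submodule.Quotient.eq (balancedRel R D X)).2 ?_).symm
  exact Submodule.subset_span ⟨e, r, x, rfl⟩

lemma NCTensor.subsingleton [Subsingleton X] : Subsingleton (NCTensor R D X) := by
  have h : ∀ t : NCTensor R D X, t = 0 := by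
    intro t
    induction t using NCTensor.induction_on with
    | hz => rfl
    | ht e x => rw [Subsingleton.elim x (0 : X)]; exact NCTensor.tmul_zero e
    | ha s t hs ht => rw [hs, ht, add_zero]
  exact ⟨fun a b => by rw [h a, h b]⟩

end NCT2

section NCT3

/-! D-module structure when D is a ring with commuting actions -/

variable {R : Type} [Ring R] {D : Type} [Ring D] [Module Rᵐᵒᵖ D] [SMulCommClass Rᵐᵒᵖ D D]
variable {X Y : Type} [AddCommGroup X] [Module R X] [AddCommGroup Y] [Module R Y]

noncomputable def NCTensor.lsmul (d : D) : NCTensor R D X →ₗ[ℤ] NCTensor R D X :=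
  Submodule.mapQ (balancedRel R D X) (balancedRel R D X)
    (TensorProduct.map (LinearMap.mulLeft ℤ d) LinearMap.id)
    (by
      rw [balancedRel, Submodule.span_le]
      rintro z ⟨e, r, x, rfl⟩
      simp only [SetLike.mem_coe, Submodule.mem_comap, map_sub, TensorProduct.map_tmul,
        LinearMap.id_coe, id_eq, LinearMap.mulLeft_apply]
      have hc : d * (MulOpposite.op r • e) = MulOpposite.op r • (d * e) := by
        rw [← smul_eq_mul, ← smul_eq_mul, smul_comm (MulOpposite.op r) d e]
      refine Submodule.subset_span ⟨d * e, r, x, ?_⟩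
      have h := (TensorProduct.map (LinearMap.mulLeft ℤ d) (LinearMap.id (R := ℤ) (M := X))).map_sub
        ((MulOpposite.op r • e) ⊗ₜ[ℤ] x) (e ⊗ₜ[ℤ] (r • x))
      rw [TensorProduct.map_tmul, TensorProduct.map_tmul] at h
      simp only [LinearMap.id_coe, id_eq, LinearMap.mulLeft_apply] at h
      rw [hc] at h
      exact h)

lemma NCTensor.lsmul_tmul (d : D) (e : D) (x : X) :
    NCTensor.lsmul d (NCTensor.tmul R D e x) = NCTensor.tmul R D (d * e) x := by
  rfl

noncomputable instance NCTensor.moduleD : Module D (NCTensor R D X) where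
  smul d t := NCTensor.lsmul d t
  one_smul t := by
    change NCTensor.lsmul 1 t = t
    induction t using NCTensor.induction_on with
    | hz => simp
    | ht e x => rw [NCTensor.lsmul_tmul, one_mul]
    | ha s t hs ht => rw [map_add, hs, ht]
  mul_smul a b t := by
    change NCTensor.lsmul (a * b) t = NCTensor.lsmul a (NCTensor.lsmul b t)
    induction t using NCTensor.induction_on with
    | hz => simp
    | ht e x => rw [NCTensor.lsmul_tmul, NCTensor.lsmul_tmul, NCTensor.lsmul_tmul, mul_assoc]
    | ha s t hs ht => rw [map_add, map_add, map_add, hs, ht]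
  smul_zero d := map_zero (NCTensor.lsmul d)
  smul_add d s t := map_add (NCTensor.lsmul d) s t
  add_smul a b t := by
    change NCTensor.lsmul (a + b) t = NCTensor.lsmul a t + NCTensor.lsmul b t
    induction t using NCTensor.induction_on with
    | hz => simp
    | ht e x => rw [NCTensor.lsmul_tmul, NCTensor.lsmul_tmul, NCTensor.lsmul_tmul, add_mul,
        NCTensor.add_tmul]
    | ha s t hs ht => rw [map_add, map_add, map_add, hs, ht]; abel
  zero_smul t := by
    change NCTensor.lsmul 0 t = 0
    induction t using NCTensor.induction_on with
    | hz => simp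
    | ht e x => rw [NCTensor.lsmul_tmul, zero_mul, NCTensor.zero_tmul]
    | ha s t hs ht => rw [map_add, hs, ht, add_zero]

end NCT3

section NCT4

variable {R : Type} [Ring R] {D : Type} [Ring D] [Module Rᵐᵒᵖ D] [SMulCommClass Rᵐᵒᵖ D D]
variable {X Y : Type} [AddCommGroup X] [Module R X] [AddCommGroup Y] [Module R Y]

lemma NCTensor.smul_tmul (d e : D) (x : X) :
    d • NCTensor.tmul R D e x = NCTensor.tmul R D (d * e) x :=
  NCTensor.lsmul_tmul d e x

lemma NCTensor.map_smulD (f : X →ₗ[R] Y) (d : D) (t : NCTensor R D X) :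
    NCTensor.map R D f (d • t) = d • NCTensor.map R D f t := by
  induction t using NCTensor.induction_on with
  | hz => rw [smul_zero, map_zero, smul_zero]
  | ht e x => rw [NCTensor.smul_tmul, NCTensor.map_tmul, NCTensor.map_tmul, NCTensor.smul_tmul]
  | ha a b ha hb =>
    rw [smul_add, map_add, ha, hb, map_add, smul_add]

noncomputable def NCTensor.mapD (f : X →ₗ[R] Y) : NCTensor R D X →ₗ[D] NCTensor R D Y where
  toFun := NCTensor.map R D f
  map_add' := map_add _
  map_smul' := fun d t => NCTensor.map_smulD f d t

lemma NCTensor.finiteD [Module.Finite R X] : Module.Finite D (NCTensor R D X) := by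
  classical
  obtain ⟨s, hs⟩ := Module.Finite.fg_top (R := R) (M := X)
  refine ⟨⟨s.image (fun x => NCTensor.tmul R D 1 x), ?_⟩⟩
  set V := Submodule.span D ((s.image (fun x => NCTensor.tmul R D (1:D) x) : Finset _) :
      Set (NCTensor R D X)) with hV
  have key : ∀ x ∈ Submodule.span R (s : Set X), ∀ e : D, NCTensor.tmul R D e x ∈ V := by
    intro x hx
    induction hx using Submodule.span_induction with
    | mem x hxs =>
      intro e
      have h1 : NCTensor.tmul R D (1:D) x ∈ V :=
        Submodule.subset_span (Finset.mem_coe.2 (Finset.mem_image_of_mem _ hxs))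
      have := V.smul_mem e h1
      rwa [NCTensor.smul_tmul, mul_one] at this
    | zero => intro e; rw [NCTensor.tmul_zero]; exact V.zero_mem
    | add x y hx hy ihx ihy => intro e; rw [NCTensor.tmul_add]; exact V.add_mem (ihx e) (ihy e)
    | smul r x hx ih => intro e; rw [NCTensor.tmul_balanced]; exact ih _
  rw [eq_top_iff]
  rintro t -
  induction t using NCTensor.induction_on with
  | hz => exact V.zero_mem
  | ht e x => exact key x (hs ▸ Submodule.mem_top) e
  | ha a b ha hb => exact V.add_mem ha hb

lemma Module.Finite.of_injectiveD {D : Type} [DivisionRing D] {T U : Type} [AddCommGroup T]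
    [Module D T] [AddCommGroup U] [Module D U] [Module.Finite D U]
    (f : T →ₗ[D] U) (hf : Function.Injective f) : Module.Finite D T := by
  have hn : IsNoetherian D U := IsNoetherian.iff_fg.2 ‹_›
  have h2 : Module.Finite D (LinearMap.range f) :=
    Module.Finite.iff_fg.2 (IsNoetherian.noetherian _)
  exact Module.Finite.equiv (LinearEquiv.ofInjective f hf).symm

end NCT4

section NCT5

variable {R : Type} [Ring R] {D : Type} [DivisionRing D] [Module Rᵐᵒᵖ D]
  [SMulCommClass Rᵐᵒᵖ D D] (ι : R →+* D)

noncomputable def NCTensor.toD (hsmul : ∀ (r : R) (e : D), MulOpposite.op r • e = e * ι r) :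
    NCTensor R D R →ₗ[ℤ] D :=
  Submodule.liftQ _ (TensorProduct.lift (LinearMap.mk₂ ℤ (fun e r => e * ι r)
    (fun e e' r => by show (e + e') * ι r = e * ι r + e' * ι r; rw [add_mul])
    (fun z e r => by show (z • e) * ι r = z • (e * ι r); rw [smul_mul_assoc])
    (fun e r r' => by show e * ι (r + r') = e * ι r + e * ι r'; rw [map_add, mul_add])
    (fun z e r => by show e * ι (z • r) = z • (e * ι r); rw [map_zsmul, mul_smul_comm])))
    (by
      rw [balancedRel, Submodule.span_le]
      rintro z ⟨e, r, x, rfl⟩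
      show TensorProduct.lift (LinearMap.mk₂ ℤ (fun (e : D) (r : R) => e * ι r) _ _ _ _)
        ((MulOpposite.op r • e) ⊗ₜ[ℤ] x - e ⊗ₜ[ℤ] (r • x)) = 0
      rw [map_sub, TensorProduct.lift.tmul, TensorProduct.lift.tmul, LinearMap.mk₂_apply,
        LinearMap.mk₂_apply]
      rw [hsmul, smul_eq_mul, map_mul, mul_assoc, sub_self])

omit [SMulCommClass Rᵐᵒᵖ D D] in
lemma NCTensor.toD_tmul (hsmul : ∀ (r : R) (e : D), MulOpposite.op r • e = e * ι r)
    (e : D) (r : R) : NCTensor.toD ι hsmul (NCTensor.tmul R D e r) = e * ι r := rfl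

lemma NCTensor.toD_smul (hsmul : ∀ (r : R) (e : D), MulOpposite.op r • e = e * ι r)
    (d : D) (t : NCTensor R D R) :
    NCTensor.toD ι hsmul (d • t) = d * NCTensor.toD ι hsmul t := by
  induction t using NCTensor.induction_on with
  | hz => rw [smul_zero, map_zero, mul_zero]
  | ht e x => rw [NCTensor.smul_tmul, NCTensor.toD_tmul, NCTensor.toD_tmul, mul_assoc]
  | ha a b ha hb => rw [smul_add, map_add, map_add, ha, hb, mul_add]

lemma fg_of_projective_of_finiteD (hι : Function.Injective ι)
    (hsmul : ∀ (r : R) (e : D), MulOpposite.op r • e = e * ι r)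
    (K : Type) [AddCommGroup K] [Module R K] [hp : Module.Projective R K]
    (hfin : Module.Finite D (NCTensor R D K)) : Module.Finite R K := by
  classical
  obtain ⟨s, hs⟩ := hp.out
  obtain ⟨T₀, hT₀⟩ := hfin.fg_top
  set ψ : K → NCTensor R D K →ₗ[ℤ] D := fun j =>
    (NCTensor.toD ι hsmul).comp (NCTensor.map R D ((Finsupp.lapply j).comp s)) with hψ
  have hψtm : ∀ (j : K) (e : D) (k : K), ψ j (NCTensor.tmul R D e k) = e * ι ((s k) j) := by
    intro j e k
    rw [hψ]
    simp only [LinearMap.coe_comp, Function.comp_apply, NCTensor.map_tmul]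
    rw [NCTensor.toD_tmul]
    rfl
  have hsupp : ∀ t : NCTensor R D K, ∃ S : Finset K, ∀ j ∉ S, ψ j t = 0 := by
    intro t
    induction t using NCTensor.induction_on with
    | hz => exact ⟨∅, fun j _ => map_zero _⟩
    | ht e k =>
      exact ⟨(s k).support, fun j hj => by
        rw [hψtm, Finsupp.notMem_support_iff.1 hj, map_zero, mul_zero]⟩
    | ha a b ha hb =>
      obtain ⟨Sa, hSa⟩ := ha
      obtain ⟨Sb, hSb⟩ := hb
      exact ⟨Sa ∪ Sb, fun j hj => by
        rw [map_add, hSa j (fun h => hj (Finset.mem_union_left _ h)),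
          hSb j (fun h => hj (Finset.mem_union_right _ h)), add_zero]⟩
  choose ff hff using hsupp
  set S : Finset K := T₀.sup ff with hS
  have hvanish : ∀ j, j ∉ S → ∀ t : NCTensor R D K, ψ j t = 0 := by
    intro j hj t
    have ht : t ∈ Submodule.span D (T₀ : Set (NCTensor R D K)) := by
      rw [hT₀]; exact Submodule.mem_top
    induction ht using Submodule.span_induction with
    | mem t htm =>
      have hsub : ff t ⊆ S := Finset.le_sup htm
      exact hff t j (fun hjf => hj (hsub hjf))
    | zero => exact map_zero _
    | add a b _ _ ha hb => rw [map_add, ha, hb, add_zero]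
    | smul d t _ htt =>
      rw [hψ] at htt ⊢
      simp only [LinearMap.coe_comp, Function.comp_apply] at htt ⊢
      rw [NCTensor.map_smulD, NCTensor.toD_smul, htt, mul_zero]
  have hcoef : ∀ (k : K) (j : K), j ∉ S → (s k) j = 0 := by
    intro k j hj
    have h0 := hvanish j hj (NCTensor.tmul R D 1 k)
    rw [hψtm, one_mul] at h0
    exact hι (by rw [h0, map_zero])
  refine ⟨⟨S, ?_⟩⟩
  rw [eq_top_iff]
  rintro k -
  have hk : Finsupp.linearCombination R (id : K → K) (s k) = k := hs k
  rw [← hk, Finsupp.linearCombination_apply, Finsupp.sum]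
  refine Submodule.sum_mem _ (fun j hjsup => ?_)
  have hjS : j ∈ S := by
    by_contra hns
    exact (Finsupp.mem_support_iff.1 hjsup) (hcoef k j hns)
  exact Submodule.smul_mem _ _ (Submodule.subset_span hjS)

end NCT5

end AuxNCT

section AuxSyz

section Syzygy

universe v
variable {R : Type} [Ring R]

/-- Schanuel-type argument, length-one case : if `M` has a projective resolution of length 1,
the kernel of any surjection from a projective onto `M` is projective. -/
lemma projective_ker_of_len_one (M : ModuleCat.{v} R) (h : HasProjResLen R M 1)
    (P : ModuleCat.{v} R) [hP : Module.Projective R P] (p : ↥P →ₗ[R] ↥M)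
    (hp : Function.Surjective p) :
    Module.Projective R ↥(LinearMap.ker p) := by
  obtain ⟨Q, d, e, hproj, hzero, hsurj, hex0, hex⟩ := h
  have hQ0 : Module.Projective R (Q 0) := hproj 0
  have hQ1 : Module.Projective R (Q 1) := hproj 1
  obtain ⟨h₀, hh₀⟩ := Module.projective_lifting_property (e.hom : ↥(Q 0) →ₗ[R] ↥M) p hsurj
  obtain ⟨g₀, hg₀⟩ := Module.projective_lifting_property p (e.hom : ↥(Q 0) →ₗ[R] ↥M) hp
  have hh₀' : ∀ x : ↥P, e (h₀ x) = p x := fun x => congrArg (fun f => f x) hh₀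
  have hg₀' : ∀ y : ↥(Q 0), p (g₀ y) = e y := fun y => congrArg (fun f => f y) hg₀
  -- the fiber product X of p and e
  set φ : (↥(Q 0) × ↥P) →ₗ[R] ↥M :=
    (e.hom : ↥(Q 0) →ₗ[R] ↥M).comp (LinearMap.fst R ↥(Q 0) ↥P) - p.comp (LinearMap.snd R ↥(Q 0) ↥P)
    with hφ
  set X : Submodule R (↥(Q 0) × ↥P) := LinearMap.ker φ with hX
  have hmemX : ∀ z : ↥(Q 0) × ↥P, z ∈ X ↔ e z.1 = p z.2 := by
    intro z
    rw [hX, LinearMap.mem_ker, hφ, LinearMap.sub_apply, LinearMap.comp_apply, LinearMap.comp_apply,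
      sub_eq_zero]
    rfl
  -- θ : Q 1 × P → X
  set θ₀ : (↥(Q 1) × ↥P) →ₗ[R] (↥(Q 0) × ↥P) :=
    LinearMap.prod (((d 0).hom : ↥(Q 1) →ₗ[R] ↥(Q 0)).comp (LinearMap.fst R ↥(Q 1) ↥P)
      + h₀.comp (LinearMap.snd R ↥(Q 1) ↥P)) (LinearMap.snd R ↥(Q 1) ↥P) with hθ₀
  have hθ₀mem : ∀ z, θ₀ z ∈ X := by
    intro z
    rw [hmemX]
    show e (d 0 z.1 + h₀ z.2) = p z.2
    rw [map_add, (hex0 (d 0 z.1)).2 ⟨z.1, rfl⟩, zero_add, hh₀']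
  set θ : (↥(Q 1) × ↥P) →ₗ[R] ↥X := LinearMap.codRestrict X θ₀ hθ₀mem with hθ
  have hθsurj : Function.Surjective θ := by
    rintro ⟨⟨y, x⟩, hyx⟩
    rw [hmemX] at hyx
    have hker : e (y - h₀ x) = 0 := by rw [map_sub, hh₀', hyx, sub_self]
    obtain ⟨a, ha⟩ := (hex0 (y - h₀ x)).1 hker
    refine ⟨(a, x), ?_⟩
    apply Subtype.ext
    show (d 0 a + h₀ x, x) = (y, x)
    rw [ha]
    simp
  have hθinj : Function.Injective θ := by
    rw [← LinearMap.ker_eq_bot, hθ, LinearMap.ker_codRestrict, LinearMap.ker_eq_bot']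
    rintro ⟨a, x⟩ hax
    have h2 : d 0 a + h₀ x = 0 := congrArg Prod.fst hax
    have h3 : x = 0 := congrArg Prod.snd hax
    rw [h3, map_zero, add_zero] at h2
    obtain ⟨b, hb⟩ := (hex 0 a).1 h2
    have hsub : Subsingleton ↥(Q 2) := hzero 2 (by norm_num)
    have hb0 : a = 0 := by rw [← hb, Subsingleton.elim b 0, map_zero]
    show ((a, x) : ↥(Q 1) × ↥P) = (0, 0)
    rw [hb0, h3]
  set eqv : (↥(Q 1) × ↥P) ≃ₗ[R] ↥X := LinearEquiv.ofBijective θ ⟨hθinj, hθsurj⟩ with heqv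
  -- retraction of X onto ker p
  set ι : ↥(LinearMap.ker p) →ₗ[R] ↥X := LinearMap.codRestrict X
    (LinearMap.prod 0 (Submodule.subtype (LinearMap.ker p)))
    (by
      rintro ⟨x, hx⟩
      rw [hmemX]
      show e 0 = p x
      rw [map_zero, LinearMap.mem_ker.1 hx]) with hι
  set ρ₀ : ↥X →ₗ[R] ↥P := (LinearMap.snd R ↥(Q 0) ↥P).comp (Submodule.subtype X)
      - g₀.comp ((LinearMap.fst R ↥(Q 0) ↥P).comp (Submodule.subtype X)) with hρ₀
  have hρ₀mem : ∀ z, ρ₀ z ∈ LinearMap.ker p := by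
    rintro ⟨⟨y, x⟩, hyx⟩
    rw [hmemX] at hyx
    rw [LinearMap.mem_ker]
    show p (x - g₀ y) = 0
    rw [map_sub, hg₀', hyx, sub_self]
  set ρ : ↥X →ₗ[R] ↥(LinearMap.ker p) := LinearMap.codRestrict _ ρ₀ hρ₀mem with hρ
  refine Module.Projective.of_split (M := ↥(Q 1) × ↥P)
    (eqv.symm.toLinearMap.comp ι) (ρ.comp eqv.toLinearMap) ?_
  apply LinearMap.ext
  intro z
  have h1 : eqv (eqv.symm (ι z)) = ι z := eqv.apply_symm_apply _
  have h2 : (ρ.comp eqv.toLinearMap).comp (eqv.symm.toLinearMap.comp ι) z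
      = ρ (eqv (eqv.symm (ι z))) := rfl
  rw [h2, h1]
  apply Subtype.ext
  show (z : ↥P) - g₀ 0 = (z : ↥P)
  rw [map_zero, sub_zero]

end Syzygy

section Syzygy2

universe v
variable {R : Type} [Ring R]

/-- Schanuel-type argument: a surjection from a projective onto a module with projective
resolution of length `l+2` has kernel with projective resolution of length `l+1`. -/
lemma hasProjResLen_ker (l : ℕ) (M : ModuleCat.{v} R) (h : HasProjResLen R M (l + 2))
    (P : ModuleCat.{v} R) [hP : Module.Projective R P] (p : ↥P →ₗ[R] ↥M)
    (hp : Function.Surjective p) :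
    HasProjResLen R (ModuleCat.of R ↥(LinearMap.ker p)) (l + 1) := by
  obtain ⟨Q, d, e, hproj, hzero, hsurj, hex0, hex⟩ := h
  haveI hQ0 : Module.Projective R (Q 0) := hproj 0
  haveI hQ1 : Module.Projective R (Q 1) := hproj 1
  haveI hQ2 : Module.Projective R (Q 2) := hproj 2
  obtain ⟨h₀, hh₀⟩ := Module.projective_lifting_property (e.hom : ↥(Q 0) →ₗ[R] ↥M) p hsurj
  obtain ⟨g₀, hg₀⟩ := Module.projective_lifting_property p (e.hom : ↥(Q 0) →ₗ[R] ↥M) hp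
  have hh₀' : ∀ x, e (h₀ x) = p x := fun x => congrArg (fun f => f x) hh₀
  have hg₀' : ∀ y, p (g₀ y) = e y := fun y => congrArg (fun f => f y) hg₀
  have hed0 : ∀ a, e (d 0 a) = 0 := fun a => (hex0 (d 0 a)).2 ⟨a, rfl⟩
  have hd0d1 : ∀ b, d 0 (d 1 b) = 0 := fun b => (hex 0 (d 1 b)).2 ⟨b, rfl⟩
  have hd1d2 : ∀ c, d 1 (d 2 c) = 0 := fun c => (hex 1 (d 2 c)).2 ⟨c, rfl⟩
  -- construct v : Q 0 → Q 1 with d 0 ∘ v = id - h₀ ∘ g₀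
  set Ke : Submodule R ↥(Q 0) := LinearMap.ker (e.hom : ↥(Q 0) →ₗ[R] ↥M) with hKe
  set d0' : ↥(Q 1) →ₗ[R] ↥Ke :=
    LinearMap.codRestrict Ke (d 0).hom (fun a => LinearMap.mem_ker.2 (hed0 a)) with hd0'
  have hd0'surj : Function.Surjective d0' := by
    rintro ⟨y, hy⟩
    obtain ⟨a, ha⟩ := (hex0 y).1 (LinearMap.mem_ker.1 hy)
    exact ⟨a, Subtype.ext ha⟩
  set wmap : ↥(Q 0) →ₗ[R] ↥(Q 0) := LinearMap.id - h₀.comp g₀ with hwmap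
  have hwmem : ∀ q, wmap q ∈ Ke := by
    intro q
    rw [LinearMap.mem_ker]
    show e (q - h₀ (g₀ q)) = 0
    rw [map_sub, hh₀', hg₀', sub_self]
  obtain ⟨v, hv⟩ := Module.projective_lifting_property d0'
    (LinearMap.codRestrict Ke wmap hwmem) hd0'surj
  have hv' : ∀ q, d 0 (v q) = q - h₀ (g₀ q) := by
    intro q
    have := congrArg (fun f => f q) hv
    exact Subtype.ext_iff.1 this
  -- the resolution of A = ker p
  set A : Submodule R ↥P := LinearMap.ker p with hA
  set εA : (↥(Q 1) × ↥P) →ₗ[R] ↥P :=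
    { toFun := fun z => z.2 - g₀ (d 0 z.1 + h₀ z.2)
      map_add' := by intro a b; simp only [Prod.fst_add, Prod.snd_add, map_add]; abel
      map_smul' := by
        intro r a
        show r • a.2 - g₀ (d 0 (r • a.1) + h₀ (r • a.2)) = r • (a.2 - g₀ (d 0 a.1 + h₀ a.2))
        rw [map_smul, map_smul, ← smul_add, map_smul, smul_sub] }
    with hεA
  have hεAmem : ∀ z, εA z ∈ A := by
    intro z
    rw [hA, LinearMap.mem_ker]
    show p (z.2 - g₀ (d 0 z.1 + h₀ z.2)) = 0
    rw [map_sub, hg₀', map_add, hed0, zero_add, hh₀', sub_self]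
  set D1 : (↥(Q 2) × ↥(Q 0)) →ₗ[R] (↥(Q 1) × ↥P) :=
    { toFun := fun z => (d 1 z.1 + v z.2, g₀ z.2)
      map_add' := by
        intro a b
        show (d 1 (a.1 + b.1) + v (a.2 + b.2), g₀ (a.2 + b.2))
          = (d 1 a.1 + v a.2, g₀ a.2) + (d 1 b.1 + v b.2, g₀ b.2)
        rw [map_add, map_add, map_add, Prod.mk_add_mk]
        simp only [Prod.mk.injEq]
        exact ⟨by abel, trivial⟩
      map_smul' := by
        intro r a
        show (d 1 (r • a.1) + v (r • a.2), g₀ (r • a.2)) = r • (d 1 a.1 + v a.2, g₀ a.2)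
        rw [map_smul, map_smul, map_smul, Prod.smul_mk, smul_add] }
    with hD1
  set D2 : ↥(Q 3) →ₗ[R] (↥(Q 2) × ↥(Q 0)) :=
    { toFun := fun c => (d 2 c, 0)
      map_add' := by
        intro a b
        show (d 2 (a + b), (0 : ↥(Q 0))) = (d 2 a, 0) + (d 2 b, 0)
        rw [map_add, Prod.mk_add_mk, add_zero]
      map_smul' := by
        intro r a
        show (d 2 (r • a), (0 : ↥(Q 0))) = r • (d 2 a, 0)
        rw [map_smul, Prod.smul_mk, smul_zero] }
    with hD2
  refine ⟨fun i => match i with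
      | 0 => ModuleCat.of R (↥(Q 1) × ↥P)
      | 1 => ModuleCat.of R (↥(Q 2) × ↥(Q 0))
      | (i+2) => Q (i+3),
    fun i => match i with
      | 0 => ModuleCat.ofHom D1
      | 1 => ModuleCat.ofHom D2
      | (i+2) => d (i+3),
    ModuleCat.ofHom (LinearMap.codRestrict A εA hεAmem), ?_, ?_, ?_, ?_, ?_⟩
  · -- projectivity
    intro i
    match i with
    | 0 => exact inferInstanceAs (Module.Projective R (↥(Q 1) × ↥P))
    | 1 => exact inferInstanceAs (Module.Projective R (↥(Q 2) × ↥(Q 0)))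
    | (i+2) => exact hproj (i+3)
  · -- subsingleton above l+1
    intro i hi
    match i with
    | 0 => omega
    | 1 => omega
    | (i+2) => exact hzero (i+3) (by omega)
  · -- surjectivity
    rintro ⟨x, hx⟩
    have hker : e (-(h₀ x)) = 0 := by
      rw [map_neg, hh₀', LinearMap.mem_ker.1 hx, neg_zero]
    obtain ⟨a, ha⟩ := (hex0 (-(h₀ x))).1 hker
    refine ⟨(a, x), ?_⟩
    apply Subtype.ext
    show x - g₀ (d 0 a + h₀ x) = x
    rw [ha, neg_add_cancel, map_zero, sub_zero]
  · -- Exact D1 ε'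
    intro z
    constructor
    · intro hz
      have hz' : z.2 - g₀ (d 0 z.1 + h₀ z.2) = 0 := Subtype.ext_iff.1 hz
      have hxq : z.2 = g₀ (d 0 z.1 + h₀ z.2) := by rwa [sub_eq_zero] at hz'
      have hd : d 0 (z.1 - v (d 0 z.1 + h₀ z.2)) = 0 := by
        rw [map_sub, hv', ← hxq]
        abel
      obtain ⟨b, hb⟩ := (hex 0 _).1 hd
      refine ⟨(b, d 0 z.1 + h₀ z.2), ?_⟩
      show (d 1 b + v (d 0 z.1 + h₀ z.2), g₀ (d 0 z.1 + h₀ z.2)) = z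
      rw [(hb : d 1 b = z.1 - v (d 0 z.1 + h₀ z.2)), ← hxq]
      show (z.1 - _ + _, z.2) = z
      rw [sub_add_cancel]
    · rintro ⟨⟨b, q⟩, rfl⟩
      apply Subtype.ext
      show g₀ q - g₀ (d 0 (d 1 b + v q) + h₀ (g₀ q)) = 0
      have h1 : d 0 (d 1 b + v q) = q - h₀ (g₀ q) := by
        rw [map_add, hd0d1, hv', zero_add]
      rw [h1, sub_add_cancel, sub_self]
  · -- higher exactness
    intro i
    match i with
    | 0 =>
      intro z
      constructor
      · intro hz
        have h1 : d 1 z.1 + v z.2 = 0 := congrArg Prod.fst hz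
        have h2 : g₀ z.2 = 0 := congrArg Prod.snd hz
        have h3 : z.2 = 0 := by
          have := congrArg (d 0) h1
          rw [map_add, hd0d1, zero_add, hv', h2, map_zero, sub_zero, map_zero] at this
          exact this
        rw [h3, map_zero, add_zero] at h1
        obtain ⟨c, hc⟩ := (hex 1 z.1).1 h1
        refine ⟨c, ?_⟩
        show (d 2 c, 0) = z
        rw [(hc : d 2 c = z.1), ← h3]
      · rintro ⟨c, rfl⟩
        show (d 1 (d 2 c) + v 0, g₀ 0) = 0
        rw [hd1d2, map_zero, add_zero, map_zero]
        rfl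
    | 1 =>
      intro c
      constructor
      · intro hc
        have h1 : d 2 c = 0 := congrArg Prod.fst hc
        exact (hex 2 c).1 h1
      · rintro ⟨u, rfl⟩
        show (d 2 (d 3 u), 0) = 0
        rw [(hex 2 (d 3 u)).2 ⟨u, rfl⟩]
        rfl
    | (i+2) => exact hex (i+3)

end Syzygy2

section ChainK

universe v
variable {R : Type} [Ring R]

/-- Iterated Schanuel: if `B 0` has a projective resolution of length `j+1` and
`B` is an exact chain of projectives over `B 0`, the `j`-th kernel is projective. -/
lemma chainK : ∀ (j : ℕ) (B : ℕ → ModuleCat.{v} R) (del : ∀ i, B (i+1) ⟶ B i),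
    HasProjResLen R (B 0) (j+1) →
    (∀ i, i ≤ j → Module.Projective R (B (i+1))) →
    Function.Surjective (del 0) →
    (∀ i, i + 1 ≤ j → Function.Exact ⇑(del (i+1)) ⇑(del i)) →
    Module.Projective R ↥(LinearMap.ker ((del j).hom : ↥(B (j+1)) →ₗ[R] ↥(B j))) := by
  intro j
  induction j with
  | zero =>
    intro B del hres hproj hsurj _
    haveI : Module.Projective R (B 1) := hproj 0 le_rfl
    exact projective_ker_of_len_one (B 0) hres (B 1) (del 0).hom hsurj
  | succ j ih =>
    intro B del hres hproj hsurj hex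
    haveI : Module.Projective R (B 1) := hproj 0 (by omega)
    have hker := hasProjResLen_ker j (B 0) hres (B 1) (del 0).hom hsurj
    have hex10 : Function.Exact ⇑(del 1) ⇑(del 0) := hex 0 (by omega)
    set B' : ℕ → ModuleCat.{v} R := fun i => match i with
      | 0 => ModuleCat.of R ↥(LinearMap.ker ((del 0).hom : ↥(B 1) →ₗ[R] ↥(B 0)))
      | (i+1) => B (i+2) with hB'
    set del' : ∀ i, B' (i+1) ⟶ B' i := fun i => match i with
      | 0 => ModuleCat.ofHom (LinearMap.codRestrict _ ((del 1).hom : ↥(B 2) →ₗ[R] ↥(B 1))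
          (fun a => LinearMap.mem_ker.2 ((hex10 ((del 1) a)).2 ⟨a, rfl⟩)))
      | (i+1) => del (i+2) with hdel'
    have hsurj' : Function.Surjective (del' 0) := by
      rintro ⟨y, hy⟩
      obtain ⟨a, ha⟩ := (hex10 y).1 (LinearMap.mem_ker.1 hy)
      exact ⟨a, Subtype.ext ha⟩
    have hproj' : ∀ i, i ≤ j → Module.Projective R (B' (i+1)) :=
      fun i hi => hproj (i+1) (by omega)
    have hex' : ∀ i, i + 1 ≤ j → Function.Exact ⇑(del' (i+1)) ⇑(del' i) := by
      intro i hi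
      match i with
      | 0 =>
        intro y
        have h21 := hex 1 (by omega) y
        constructor
        · intro h0
          exact h21.1 (Subtype.ext_iff.1 h0)
        · intro hr
          exact Subtype.ext (h21.2 hr)
      | (i+1) => exact hex (i+2) (by omega)
    have hfin := ih B' del' hker hproj' hsurj' hex'
    match j with
    | 0 =>
      rw [show del' 0 = ModuleCat.ofHom (LinearMap.codRestrict _ ((del 1).hom : ↥(B 2) →ₗ[R] ↥(B 1))
          (fun a => LinearMap.mem_ker.2 ((hex10 ((del 1) a)).2 ⟨a, rfl⟩))) from rfl,
        ModuleCat.hom_ofHom, LinearMap.ker_codRestrict] at hfin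
      exact hfin
    | (j+1) => exact hfin

/-- Universe-adjusted version of `chainK`:  the global-dimension hypothesis may live in any
universe. -/
lemma chainK_small (j : ℕ) (B : ℕ → ModuleCat.{0} R) (del : ∀ i, B (i+1) ⟶ B i)
    (hgl : ∀ M : ModuleCat.{v} R, HasProjResLen R M (j+1))
    (hproj : ∀ i, i ≤ j → Module.Projective R (B (i+1)))
    (hsurj : Function.Surjective (del 0))
    (hex : ∀ i, i + 1 ≤ j → Function.Exact ⇑(del (i+1)) ⇑(del i)) :
    Module.Projective R ↥(LinearMap.ker ((del j).hom : ↥(B (j+1)) →ₗ[R] ↥(B j))) := by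
  set Bl : ℕ → ModuleCat.{v} R := fun i => ModuleCat.of R (ULift.{v} ↥(B i)) with hBl
  set dell : ∀ i, Bl (i+1) ⟶ Bl i := fun i =>
    ModuleCat.ofHom ((ULift.moduleEquiv.symm.toLinearMap.comp ((((del i).hom : ↥(B (i+1)) →ₗ[R] ↥(B i))).comp
      ULift.moduleEquiv.toLinearMap)) : ULift.{v} ↥(B (i+1)) →ₗ[R] ULift.{v} ↥(B i)) with hdell
  have happ : ∀ (i : ℕ) (x : ULift.{v} ↥(B (i+1))), ((dell i) x).down = (del i) x.down :=
    fun i x => rfl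
  have hsurjl : Function.Surjective (dell 0) := by
    intro y
    obtain ⟨x, hx⟩ := hsurj y.down
    exact ⟨ULift.up x, ULift.down_injective (by rw [happ]; exact hx)⟩
  have hprojl : ∀ i, i ≤ j → Module.Projective R (Bl (i+1)) := by
    intro i hi
    haveI := hproj i hi
    exact Module.Projective.of_equiv (M := ↥(B (i+1)))
      (ULift.moduleEquiv.symm : ↥(B (i+1)) ≃ₗ[R] ULift.{v} ↥(B (i+1)))
  have hexl : ∀ i, i + 1 ≤ j → Function.Exact ⇑(dell (i+1)) ⇑(dell i) := by
    intro i hi y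
    constructor
    · intro h0
      have h0' : (del i) y.down = 0 := by
        rw [← happ, h0]
        rfl
      obtain ⟨x, hx⟩ := (hex i hi y.down).1 h0'
      exact ⟨ULift.up x, ULift.down_injective (by rw [happ]; exact hx)⟩
    · rintro ⟨x, rfl⟩
      apply ULift.down_injective
      rw [happ, happ]
      exact (hex i hi ((del (i+1)) x.down)).2 ⟨x.down, rfl⟩
  have hres : HasProjResLen R (Bl 0) (j+1) := hgl (Bl 0)
  have hKl := chainK j Bl dell hres hprojl hsurjl hexl
  have hmem : ∀ x : ULift.{v} ↥(B (j+1)),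
      x ∈ LinearMap.ker ((dell j).hom : ↥(Bl (j+1)) →ₗ[R] ↥(Bl j))
        ↔ x.down ∈ LinearMap.ker ((del j).hom : ↥(B (j+1)) →ₗ[R] ↥(B j)) := by
    intro x
    rw [LinearMap.mem_ker, LinearMap.mem_ker, ← happ]
    exact ⟨fun h => congrArg ULift.down h, fun h => ULift.down_injective h⟩
  haveI := hKl
  refine Module.Projective.of_equiv'
    (M := ↥(LinearMap.ker ((dell j).hom : ↥(Bl (j+1)) →ₗ[R] ↥(Bl j)))) ?_
  exact
    { toFun := fun x => ⟨x.1.down, (hmem _).1 x.2⟩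
      invFun := fun y => ⟨ULift.up y.1, (hmem _).2 y.2⟩
      map_add' := fun a b => rfl
      map_smul' := fun r a => rfl
      left_inv := fun a => Subtype.ext rfl
      right_inv := fun a => Subtype.ext rfl }

end ChainK

section ExChainSec

variable (R : Type) [Ring R]

/-- A projective resolution (exact chain of projectives) of `M`. -/
structure ExChain (M : ModuleCat.{0} R) where
  F : ℕ → ModuleCat.{0} R
  d : ∀ i, F (i+1) ⟶ F i
  ε : F 0 ⟶ M
  proj : ∀ i, Module.Projective R (F i)
  surj : Function.Surjective ε
  ex0 : Function.Exact ⇑(d 0) ⇑ε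
  ex : ∀ i, Function.Exact ⇑(d (i+1)) ⇑(d i)

variable {R}

/-- The trivial resolution of a projective module. -/
noncomputable def zchain (N : ModuleCat.{0} R) (hN : Module.Projective R N) : ExChain R N where
  F := fun i => match i with | 0 => N | (_+1) => ModuleCat.of R PUnit
  d := fun i => match i with | 0 => 0 | (_+1) => 0
  ε := 𝟙 N
  proj := fun i => match i with
    | 0 => hN
    | (_+1) => inferInstanceAs (Module.Projective R PUnit)
  surj := fun y => ⟨y, rfl⟩
  ex0 := by
    intro y
    constructor
    · intro h
      exact ⟨0, by rw [map_zero]; exact (show y = 0 from h).symm⟩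
    · rintro ⟨x, rfl⟩
      rfl
  ex := by
    intro i y
    constructor
    · intro _
      exact ⟨0, Subsingleton.elim _ _⟩
    · intro _
      rw [Subsingleton.elim y (0 : _)]
      exact map_zero _

/-- Splicing a surjection with a resolution of its kernel. -/
noncomputable def spliceChain (M : ModuleCat.{0} R) (P : ModuleCat.{0} R)
    (hP : Module.Projective R P) (e : P ⟶ M) (he : Function.Surjective e)
    (C : ExChain R (ModuleCat.of R ↥(LinearMap.ker (e.hom : ↥P →ₗ[R] ↥M)))) : ExChain R M where
  F := fun i => match i with | 0 => P | (i+1) => C.F i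
  d := fun i => match i with
    | 0 => ModuleCat.ofHom ((Submodule.subtype (LinearMap.ker (e.hom : ↥P →ₗ[R] ↥M))).comp
        (C.ε.hom : ↥(C.F 0) →ₗ[R] ↥(LinearMap.ker (e.hom : ↥P →ₗ[R] ↥M))))
    | (i+1) => C.d i
  ε := e
  proj := fun i => match i with | 0 => hP | (i+1) => C.proj i
  surj := he
  ex0 := by
    intro y
    constructor
    · intro h
      obtain ⟨x, hx⟩ := C.surj ⟨y, LinearMap.mem_ker.2 h⟩
      exact ⟨x, congrArg Subtype.val hx⟩
    · rintro ⟨x, rfl⟩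
      exact (C.ε x).2
  ex := fun i => match i with
    | 0 => by
      intro y
      have h := C.ex0 y
      constructor
      · intro h0
        exact h.1 (Subtype.ext h0)
      · intro hr
        exact congrArg Subtype.val (h.2 hr)
    | (i+1) => C.ex i

/-- Building a resolution whose `j+1`-st term is the `j`-th kernel of a given exact
chain of finite projectives. -/
lemma tchain : ∀ (j : ℕ) (B : ℕ → ModuleCat.{0} R) (del : ∀ i, B (i+1) ⟶ B i),
    Function.Surjective (del 0) →
    (∀ i, i + 1 ≤ j → Function.Exact ⇑(del (i+1)) ⇑(del i)) →
    (∀ i, i ≤ j → Module.Projective R (B (i+1))) →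
    (∀ i, i ≤ j → Module.Finite R (B (i+1))) →
    Module.Projective R ↥(LinearMap.ker ((del j).hom : ↥(B (j+1)) →ₗ[R] ↥(B j))) →
    ∃ C : ExChain R (B 0),
      C.F (j+1) = ModuleCat.of R ↥(LinearMap.ker ((del j).hom : ↥(B (j+1)) →ₗ[R] ↥(B j))) ∧
      Module.Finite R (C.F j) ∧ Subsingleton (C.F (j+2)) := by
  intro j
  induction j with
  | zero =>
    intro B del hsurj hex hproj hfin hK
    refine ⟨spliceChain (B 0) (B 1) (hproj 0 le_rfl) (del 0) hsurj
      (zchain (ModuleCat.of R ↥(LinearMap.ker ((del 0).hom : ↥(B 1) →ₗ[R] ↥(B 0)))) hK),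
      rfl, hfin 0 le_rfl, ?_⟩
    exact inferInstanceAs (Subsingleton PUnit)
  | succ j ih =>
    intro B del hsurj hex hproj hfin hK
    have hex10 : Function.Exact ⇑(del 1) ⇑(del 0) := hex 0 (by omega)
    set B' : ℕ → ModuleCat.{0} R := fun i => match i with
      | 0 => ModuleCat.of R ↥(LinearMap.ker ((del 0).hom : ↥(B 1) →ₗ[R] ↥(B 0)))
      | (i+1) => B (i+2) with hB'
    set del' : ∀ i, B' (i+1) ⟶ B' i := fun i => match i with
      | 0 => ModuleCat.ofHom (LinearMap.codRestrict _ ((del 1).hom : ↥(B 2) →ₗ[R] ↥(B 1))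
          (fun a => LinearMap.mem_ker.2 ((hex10 ((del 1) a)).2 ⟨a, rfl⟩)))
      | (i+1) => del (i+2) with hdel'
    have hsurj' : Function.Surjective (del' 0) := by
      rintro ⟨y, hy⟩
      obtain ⟨a, ha⟩ := (hex10 y).1 (LinearMap.mem_ker.1 hy)
      exact ⟨a, Subtype.ext ha⟩
    have hex' : ∀ i, i + 1 ≤ j → Function.Exact ⇑(del' (i+1)) ⇑(del' i) := by
      intro i hi
      match i with
      | 0 =>
        intro y
        have h21 := hex 1 (by omega) y
        constructor
        · intro h0
          exact h21.1 (Subtype.ext_iff.1 h0)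
        · intro hr
          exact Subtype.ext (h21.2 hr)
      | (i+1) => exact hex (i+2) (by omega)
    have hproj' : ∀ i, i ≤ j → Module.Projective R (B' (i+1)) :=
      fun i hi => hproj (i+1) (by omega)
    have hfin' : ∀ i, i ≤ j → Module.Finite R (B' (i+1)) :=
      fun i hi => hfin (i+1) (by omega)
    have hK' : Module.Projective R ↥(LinearMap.ker ((del' j).hom : ↥(B' (j+1)) →ₗ[R] ↥(B' j))) := by
      match j with
      | 0 =>
        rw [show del' 0 = ModuleCat.ofHom (LinearMap.codRestrict _ ((del 1).hom : ↥(B 2) →ₗ[R] ↥(B 1))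
            (fun a => LinearMap.mem_ker.2 ((hex10 ((del 1) a)).2 ⟨a, rfl⟩))) from rfl,
          ModuleCat.hom_ofHom, LinearMap.ker_codRestrict]
        exact hK
      | (j+1) => exact hK
    obtain ⟨C', hC1, hC2, hC3⟩ := ih B' del' hsurj' hex' hproj' hfin' hK'
    refine ⟨spliceChain (B 0) (B 1) (hproj 0 (by omega)) (del 0) hsurj C', ?_, hC2, hC3⟩
    have hC1' : C'.F (j+1) = ModuleCat.of R
        ↥(LinearMap.ker ((del (j+1)).hom : ↥(B (j+2)) →ₗ[R] ↥(B (j+1)))) := by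
      match j with
      | 0 =>
        rw [hC1, show del' 0 = ModuleCat.ofHom (LinearMap.codRestrict _ ((del 1).hom : ↥(B 2) →ₗ[R] ↥(B 1))
            (fun a => LinearMap.mem_ker.2 ((hex10 ((del 1) a)).2 ⟨a, rfl⟩))) from rfl,
          ModuleCat.hom_ofHom, LinearMap.ker_codRestrict]
      | (j+1) => exact hC1
    exact hC1'

end ExChainSec

section FPAssemble

variable {R : Type} [Ring R]

lemma fpSplice (M : ModuleCat.{0} R) (P : ModuleCat.{0} R)
    (hfree : Module.Free R P) (hfin : Module.Finite R P)
    (e : P ⟶ M) (he : Function.Surjective e) (l : ℕ)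
    (h : ModuleTypeFPn R (ModuleCat.of R ↥(LinearMap.ker (e.hom : ↥P →ₗ[R] ↥M))) l) :
    ModuleTypeFPn R M (l + 1) := by
  obtain ⟨H, dH, η, hfinH, hfreeH, hsurjH, hex0H, hexH⟩ := h
  refine ⟨fun i => match i with | 0 => P | (i+1) => H i,
    fun i => match i with
      | 0 => ModuleCat.ofHom ((Submodule.subtype (LinearMap.ker (e.hom : ↥P →ₗ[R] ↥M))).comp
          (η.hom : ↥(H 0) →ₗ[R] ↥(LinearMap.ker (e.hom : ↥P →ₗ[R] ↥M))))
      | (i+1) => dH i,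
    e, ?_, ?_, he, ?_, ?_⟩
  · intro i hi
    match i with
    | 0 => exact hfin
    | (i+1) => exact hfinH i (by omega)
  · intro i hi
    match i with
    | 0 => exact hfree
    | (i+1) => exact hfreeH i (by omega)
  · intro y
    constructor
    · intro h
      obtain ⟨x, hx⟩ := hsurjH ⟨y, LinearMap.mem_ker.2 h⟩
      exact ⟨x, congrArg Subtype.val hx⟩
    · rintro ⟨x, rfl⟩
      exact (η x).2
  · intro i hi
    match i with
    | 0 =>
      intro y
      have h := hex0H y
      constructor
      · intro h0
        exact h.1 (Subtype.ext h0)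
      · intro hr
        exact congrArg Subtype.val (h.2 hr)
    | (i+1) => exact hexH i (by omega)

lemma fpExtend : ∀ (l : ℕ) (B : ℕ → ModuleCat.{0} R) (del : ∀ i, B (i+1) ⟶ B i),
    Function.Surjective (del 0) →
    (∀ j, j + 2 ≤ l + 1 → Function.Exact ⇑(del (j+1)) ⇑(del j)) →
    (∀ i, 1 ≤ i → i ≤ l + 1 → Module.Finite R (B i) ∧ Module.Free R (B i)) →
    ∀ (FF : ModuleCat.{0} R), Module.Finite R FF → Module.Free R FF →
    ∀ (φ : FF ⟶ B (l+1)),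
    LinearMap.range (φ.hom : ↥FF →ₗ[R] ↥(B (l+1)))
      = LinearMap.ker ((del l).hom : ↥(B (l+1)) →ₗ[R] ↥(B l)) →
    ModuleTypeFPn R (B 0) (l+1) := by
  intro l
  induction l with
  | zero =>
    intro B del hsurj hex hff FF hFFfin hFFfree φ hrange
    refine ⟨fun i => match i with | 0 => B 1 | (i+1) => FF,
      fun i => match i with | 0 => φ | (i+1) => 0,
      del 0, ?_, ?_, hsurj, ?_, ?_⟩
    · intro i hi
      match i with
      | 0 => exact (hff 1 le_rfl le_rfl).1
      | (i+1) => exact hFFfin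
    · intro i hi
      match i with
      | 0 => exact (hff 1 le_rfl le_rfl).2
      | (i+1) => exact hFFfree
    · intro y
      rw [show ((del 0) y = 0) ↔ y ∈ LinearMap.ker ((del 0).hom : ↥(B 1) →ₗ[R] ↥(B 0))
          from Iff.rfl, ← hrange]
      exact Iff.rfl
    · intro i hi
      exact absurd hi (by omega)
  | succ l ih =>
    intro B del hsurj hex hff FF hFFfin hFFfree φ hrange
    have hex10 : Function.Exact ⇑(del 1) ⇑(del 0) := hex 0 (by omega)
    set B' : ℕ → ModuleCat.{0} R := fun i => match i with
      | 0 => ModuleCat.of R ↥(LinearMap.ker ((del 0).hom : ↥(B 1) →ₗ[R] ↥(B 0)))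
      | (i+1) => B (i+2) with hB'
    set del' : ∀ i, B' (i+1) ⟶ B' i := fun i => match i with
      | 0 => ModuleCat.ofHom (LinearMap.codRestrict _ ((del 1).hom : ↥(B 2) →ₗ[R] ↥(B 1))
          (fun a => LinearMap.mem_ker.2 ((hex10 ((del 1) a)).2 ⟨a, rfl⟩)))
      | (i+1) => del (i+2) with hdel'
    have hsurj' : Function.Surjective (del' 0) := by
      rintro ⟨y, hy⟩
      obtain ⟨a, ha⟩ := (hex10 y).1 (LinearMap.mem_ker.1 hy)
      exact ⟨a, Subtype.ext ha⟩
    have hex' : ∀ j, j + 2 ≤ l + 1 → Function.Exact ⇑(del' (j+1)) ⇑(del' j) := by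
      intro j hj
      match j, hj with
      | 0, hj =>
        intro y
        have h21 := hex 1 (by omega) y
        constructor
        · intro h0
          exact h21.1 (Subtype.ext_iff.1 h0)
        · intro hr
          exact Subtype.ext (h21.2 hr)
      | (j+1), hj => exact hex (j+2) (by omega)
    have hff' : ∀ i, 1 ≤ i → i ≤ l + 1 → Module.Finite R (B' i) ∧ Module.Free R (B' i) := by
      intro i h1 h2
      match i with
      | (i+1) => exact hff (i+2) (by omega) (by omega)
    have hrange' : LinearMap.range (φ.hom : ↥FF →ₗ[R] ↥(B' (l+1)))
        = LinearMap.ker ((del' l).hom : ↥(B' (l+1)) →ₗ[R] ↥(B' l)) := by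
      match l with
      | 0 =>
        rw [show del' 0 = ModuleCat.ofHom (LinearMap.codRestrict _ ((del 1).hom : ↥(B 2) →ₗ[R] ↥(B 1))
            (fun a => LinearMap.mem_ker.2 ((hex10 ((del 1) a)).2 ⟨a, rfl⟩))) from rfl,
          ModuleCat.hom_ofHom, LinearMap.ker_codRestrict]
        exact hrange
      | (l+1) => exact hrange
    have hres := ih B' del' hsurj' hex' hff' FF hFFfin hFFfree φ hrange'
    exact fpSplice (B 0) (B 1) (hff 1 (by omega) (by omega)).2 (hff 1 (by omega) (by omega)).1
      (del 0) hsurj (l+1) hres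

end FPAssemble

end AuxSyz

/-- Let `R` be a ring of left global dimension `n` that embeds into a division ring `D`
such that `D`, viewed as a right `R`-module via the embedding, has weak dimension at most
`n - 1`, i.e. `Tor_n^R(D, M) = 0` for every left `R`-module `M` (expressed by saying that
tensoring any projective resolution of `M` with `D` over `R` yields a complex exact at
position `n`).  Then every left ideal of `R` of type `FP_{n-1}` is of type `FP_n`;
that is, `R` is left `(n-1)`-coherent. -/
theorem coherence_of_weak_dimension
    (R : Type) [Ring R] (D : Type) [DivisionRing D]
    (ι : R →+* D) (hι : Function.Injective ι)
    (n m : ℕ) (hnm : n = m + 1)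
    -- `R` has left global dimension `n`
    (hgl : ∀ M : ModuleCat R, HasProjResLen R M n)
    (hglmin : ∀ l : ℕ, (∀ M : ModuleCat R, HasProjResLen R M l) → n ≤ l) :
    letI : Module Rᵐᵒᵖ D := Module.compHom D (RingHom.op ι)
    -- `D` has weak dimension at most `n - 1` as a right `R`-module:
    -- `Tor_n^R(D, M) = 0` for every left `R`-module `M`
    (∀ (M : ModuleCat R) (F : ℕ → ModuleCat R) (d : ∀ i, F (i + 1) ⟶ F i) (ε : F 0 ⟶ M),
      (∀ i, Module.Projective R (F i)) → Function.Surjective ε → Function.Exact (d 0) ε →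
      (∀ i, Function.Exact (d (i + 1)) (d i)) →
      Function.Exact (NCTensor.map R D ((d (m + 1)).hom : F (m + 2) →ₗ[R] F (m + 1)))
        (NCTensor.map R D ((d m).hom : F (m + 1) →ₗ[R] F m))) →
    -- conclusion: `R` is left `(n-1)`-coherent
    ∀ I : Ideal R, ModuleTypeFPn R (ModuleCat.of R I) m → ModuleTypeFPn R (ModuleCat.of R I) n := by
  intro hTor I hFP
  letI : Module Rᵐᵒᵖ D := Module.compHom D (RingHom.op ι)
  subst hnm
  -- the right D-action is given by multiplication through ι
  have hsmul : ∀ (r : R) (e : D), MulOpposite.op r • e = e * ι r := fun r e => rfl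
  haveI hscc : SMulCommClass Rᵐᵒᵖ D D := by
    constructor
    intro r d e
    rw [smul_eq_mul, ← MulOpposite.op_unop r, hsmul, hsmul, smul_eq_mul, mul_assoc]
  obtain ⟨G, dG, ε, hGfin, hGfree, hsurj, hex0, hexG⟩ := hFP
  -- the augmented chain  I ← G 0 ← G 1 ← ...
  set B : ℕ → ModuleCat.{0} R := fun i => match i with
    | 0 => ModuleCat.of R ↥I
    | (i+1) => G i with hB
  set del : ∀ i, B (i+1) ⟶ B i := fun i => match i with
    | 0 => ε
    | (i+1) => dG i with hdel
  have hBsurj : Function.Surjective (del 0) := hsurj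
  have hBex : ∀ j, j + 2 ≤ m + 1 → Function.Exact ⇑(del (j+1)) ⇑(del j) := by
    intro j hj
    match j, hj with
    | 0, _ => exact hex0
    | (j+1), hj => exact hexG j (by omega)
  have hBff : ∀ i, 1 ≤ i → i ≤ m + 1 → Module.Finite R (B i) ∧ Module.Free R (B i) := by
    intro i h1 h2
    match i, h2 with
    | (i+1), h2 => exact ⟨hGfin i (by omega), hGfree i (by omega)⟩
  have hBproj : ∀ i, i ≤ m → Module.Projective R (B (i+1)) := by
    intro i hi
    haveI := hGfree i (by omega)
    exact inferInstance
  have hBfin : ∀ i, i ≤ m → Module.Finite R (B (i+1)) :=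
    fun i hi => (hBff (i+1) (by omega) (by omega)).1
  -- K := the m-th kernel is projective (Schanuel + global dimension)
  have hKproj : Module.Projective R ↥(LinearMap.ker ((del m).hom : ↥(B (m+1)) →ₗ[R] ↥(B m))) :=
    chainK_small m B del hgl hBproj hBsurj (fun i hi => hBex i (by omega))
  -- build a projective resolution of I with K in degree m+1
  obtain ⟨C, hC1, hC2, hC3⟩ :=
    tchain m B del hBsurj (fun i hi => hBex i (by omega)) hBproj hBfin hKproj
  -- apply the Tor-vanishing hypothesis
  have hTorC := hTor (B 0) C.F C.d C.ε C.proj C.surj C.ex0 C.ex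
  haveI hsub : Subsingleton ↥(C.F (m+2)) := hC3
  haveI hsubT : Subsingleton (NCTensor R D ↥(C.F (m+2))) := NCTensor.subsingleton
  have hinj : Function.Injective
      ⇑(NCTensor.map R D ((C.d m).hom : ↥(C.F (m+1)) →ₗ[R] ↥(C.F m))) := by
    intro a b hab
    have h0 : NCTensor.map R D ((C.d m).hom : ↥(C.F (m+1)) →ₗ[R] ↥(C.F m)) (a - b) = 0 := by
      rw [map_sub, hab, sub_self]
    obtain ⟨c, hc⟩ := (hTorC (a - b)).1 h0
    rw [Subsingleton.elim c 0, map_zero] at hc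
    have : a - b = 0 := hc.symm
    rwa [sub_eq_zero] at this
  -- D ⊗ K is finite dimensional
  haveI hfinFm : Module.Finite R ↥(C.F m) := hC2
  haveI hTfin : Module.Finite D (NCTensor R D ↥(C.F m)) := NCTensor.finiteD
  have hTfinK : Module.Finite D (NCTensor R D ↥(C.F (m+1))) :=
    Module.Finite.of_injectiveD (NCTensor.mapD ((C.d m).hom : ↥(C.F (m+1)) →ₗ[R] ↥(C.F m))) hinj
  rw [hC1] at hTfinK
  have hTfinK' : Module.Finite D
      (NCTensor R D ↥(LinearMap.ker ((del m).hom : ↥(B (m+1)) →ₗ[R] ↥(B m)))) := hTfinK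
  -- hence K is finitely generated
  set K : Submodule R ↥(B (m+1)) := LinearMap.ker ((del m).hom : ↥(B (m+1)) →ₗ[R] ↥(B m)) with hKdef
  haveI hKproj' : Module.Projective R ↥K := hKproj
  have hTfinK'' : Module.Finite D (NCTensor R D ↥K) := hTfinK'
  haveI hKfin : Module.Finite R ↥K := fg_of_projective_of_finiteD ι hι hsmul ↥K hTfinK''
  -- extract generators and extend the resolution one more step
  classical
  obtain ⟨t, ht⟩ := hKfin.fg_top
  set FF : ModuleCat.{0} R := ModuleCat.of R ({x // x ∈ t} →₀ R) with hFF
  haveI hFFfree : Module.Free R FF := inferInstanceAs (Module.Free R ({x // x ∈ t} →₀ R))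
  haveI hFFfin : Module.Finite R FF := inferInstanceAs (Module.Finite R ({x // x ∈ t} →₀ R))
  set φ0 : ({x // x ∈ t} →₀ R) →ₗ[R] ↥(B (m+1)) :=
    Finsupp.linearCombination R (fun x : {x // x ∈ t} => ((x : ↥K) : ↥(B (m+1)))) with hφ0
  have hrange : LinearMap.range φ0 = K := by
    rw [hφ0, Finsupp.range_linearCombination]
    have himg : Set.range (fun x : {x // x ∈ t} => ((x : ↥K) : ↥(B (m+1))))
        = K.subtype '' (t : Set ↥K) := by
      ext y
      constructor
      · rintro ⟨x, rfl⟩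
        exact ⟨x.1, x.2, rfl⟩
      · rintro ⟨z, hz, rfl⟩
        exact ⟨⟨z, hz⟩, rfl⟩
    rw [himg, Submodule.span_image, ht, Submodule.map_subtype_top]
  exact fpExtend m B del hBsurj hBex hBff FF hFFfin hFFfree (ModuleCat.ofHom φ0) (hrange.trans hKdef)
end
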